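/- Let s, v > 0, t > w, s ≠ v, and let Q_{s,t,v,w} be the quadrilateral with vertices (0,0), (0,1), (s,t), (v,w). Then Q_{s,t,v,w} is a type 1 midpoint diagonal quadrilateral (the diagonals meet at the midpoint of the diagonal from (0,1) to (v,w)) if and only if vt = (w+1)s, and is a type 2 midpoint diagonal quadrilateral (the diagonals meet at the midpoint of the diagonal from (0,0) to (s,t)) if and only if (t−2)v = (w−1)s. -/

import Mathlib

theorem stmt16 (s t v w : ℝ) (hs : 0 < s) (hv : 0 < v) (htw : w < t) (hsv : s ≠ v)
    (hf1 : 0 < v * (t - 1) + (1 - w) * s) (hf2 : 0 < v * t - w * s)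
    (hf3 : w * s - v * (t - 1) ≠ 0) :
    -- type 1: diagonals meet at the midpoint of the diagonal from (0,1) to (v,w)
    ((∃ P : ℝ × ℝ, P ∈ openSegment ℝ ((0 : ℝ), (0 : ℝ)) ((s, t) : ℝ × ℝ) ∧
        P ∈ openSegment ℝ ((0 : ℝ), (1 : ℝ)) ((v, w) : ℝ × ℝ) ∧
        P = midpoint ℝ ((0 : ℝ), (1 : ℝ)) ((v, w) : ℝ × ℝ)) ↔ v * t = (w + 1) * s) ∧
    -- type 2: diagonals meet at the midpoint of the diagonal from (0,0) to (s,t)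
    ((∃ P : ℝ × ℝ, P ∈ openSegment ℝ ((0 : ℝ), (0 : ℝ)) ((s, t) : ℝ × ℝ) ∧
        P ∈ openSegment ℝ ((0 : ℝ), (1 : ℝ)) ((v, w) : ℝ × ℝ) ∧
        P = midpoint ℝ ((0 : ℝ), (0 : ℝ)) ((s, t) : ℝ × ℝ)) ↔ (t - 2) * v = (w - 1) * s) := by
  have hm1 : midpoint ℝ ((0 : ℝ), (1 : ℝ)) ((v, w) : ℝ × ℝ) = (v / 2, (w + 1) / 2) := by
    rw [midpoint_eq_smul_add]
    simp [Prod.ext_iff]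
    constructor <;> ring
  have hm2 : midpoint ℝ ((0 : ℝ), (0 : ℝ)) ((s, t) : ℝ × ℝ) = (s / 2, t / 2) := by
    rw [midpoint_eq_smul_add]
    simp [Prod.ext_iff]
    constructor <;> ring
  constructor
  · constructor
    · rintro ⟨P, h1, h2, hP⟩
      rw [hP, hm1] at h1
      obtain ⟨a, b, ha, hb, hab, heq⟩ := h1
      simp [Prod.ext_iff, Prod.smul_mk] at heq
      obtain ⟨e1, e2⟩ := heq
      linear_combination 2*s*e2 - 2*t*e1
    · intro h
      have hvs : v < 2 * s := by nlinarith
      refine ⟨(v / 2, (w + 1) / 2), ?_, ?_, hm1.symm⟩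
      · refine ⟨1 - v / (2 * s), v / (2 * s), by
          have : v / (2 * s) < 1 := by
            rw [div_lt_one (by linarith)]; linarith
          linarith, by positivity, by ring, ?_⟩
        simp [Prod.ext_iff, Prod.smul_mk]
        constructor
        · field_simp
        · field_simp; linear_combination h
      · exact ⟨1/2, 1/2, by norm_num, by norm_num, by norm_num, by
          simp [Prod.ext_iff, Prod.smul_mk]; constructor <;> ring⟩
  · constructor
    · rintro ⟨P, h1, h2, hP⟩
      rw [hP, hm2] at h2
      obtain ⟨a, b, ha, hb, hab, heq⟩ := h2
      simp [Prod.ext_iff, Prod.smul_mk] at heq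
      obtain ⟨e1, e2⟩ := heq
      linear_combination 2*(w-1)*e1 + 2*v*hab - 2*v*e2
    · intro h
      have hsv2 : s < 2 * v := by nlinarith
      refine ⟨(s / 2, t / 2), ?_, ?_, hm2.symm⟩
      · exact ⟨1/2, 1/2, by norm_num, by norm_num, by norm_num, by
          simp [Prod.ext_iff, Prod.smul_mk]; constructor <;> ring⟩
      · refine ⟨1 - s / (2 * v), s / (2 * v), by
          have : s / (2 * v) < 1 := by
            rw [div_lt_one (by linarith)]; linarith
          linarith, by positivity, by ring, ?_⟩
        simp [Prod.ext_iff, Prod.smul_mk]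
        constructor
        · field_simp
        · field_simp; linear_combination -h
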